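/- Let r ∈ ℚ with 0 < r < 1 and n(r) > 1 (so 1 < n(r) < d(r) and S_r is atomic). Then for every k ∈ ℕ: (i) if k < n(r), then U_k(S_r) = {k}; (ii) if n(r) ≤ k < d(r), then U_k(S_r) = { k + j·(d(r) − n(r)) : j ∈ ℕ₀ }; (iii) if k ≥ d(r), then there exists a negative integer ℓ such that U_k(S_r) = { k + j·(d(r) − n(r)) : j ∈ ℤ, j ≥ ℓ }. -/

import Mathlib

open Finsupp
open scoped ENNReal

/-- The Puiseux monoid (rational cyclic semiring) `S_r`, the additive submonoid of `ℚ`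
generated by the nonnegative powers of `r`. -/
def S (r : ℚ) : AddSubmonoid ℚ := AddSubmonoid.closure {x : ℚ | ∃ n : ℕ, x = r ^ n}

/-- A factorization of `x` over the powers of `r`: a finitely supported choice of
coefficients `α i` with `∑ α i * r ^ i = x`. -/
def IsFactorization (r x : ℚ) (α : ℕ →₀ ℕ) : Prop :=
  (α.sum fun i c => (c : ℚ) * r ^ i) = x

/-- The length of a factorization. -/
def flen (α : ℕ →₀ ℕ) : ℕ := α.sum fun _ c => c

/-- The set of lengths of factorizations of `x` over the powers of `r`. -/
def lengthSet (r x : ℚ) : Set ℕ :=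
  {t | ∃ α : ℕ →₀ ℕ, IsFactorization r x α ∧ flen α = t}

/-- An atom of `S_r`: a nonzero element that is not the sum of two nonzero elements. -/
def IsAtomS (r a : ℚ) : Prop :=
  a ∈ S r ∧ a ≠ 0 ∧ ¬ ∃ y z : ℚ, y ∈ S r ∧ z ∈ S r ∧ y ≠ 0 ∧ z ≠ 0 ∧ a = y + z

/-- The set of lengths of `x` as sums of atoms of `S_r`. -/
def atomLengthSet (r x : ℚ) : Set ℕ :=
  {t | ∃ f : Fin t → ℚ, (∀ i, IsAtomS r (f i)) ∧ ∑ i, f i = x}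

/-- The union of the sets of lengths (over atoms) of elements of `S_r` containing `k`. -/
def Uk (r : ℚ) (k : ℕ) : Set ℕ :=
  {l | ∃ x ∈ S r, x ≠ 0 ∧ k ∈ atomLengthSet r x ∧ l ∈ atomLengthSet r x}

namespace Aux

lemma val_add (r : ℚ) (α β : ℕ →₀ ℕ) :
    ((α + β).sum fun i c => (c : ℚ) * r ^ i) =
      (α.sum fun i c => (c : ℚ) * r ^ i) + (β.sum fun i c => (c : ℚ) * r ^ i) :=
  Finsupp.sum_add_index' (fun i => by simp) (fun i b c => by push_cast; ring)

lemma isfact_add {r x y : ℚ} {α β : ℕ →₀ ℕ} (hα : IsFactorization r x α)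
    (hβ : IsFactorization r y β) : IsFactorization r (x + y) (α + β) := by
  unfold IsFactorization at *
  rw [val_add, hα, hβ]

lemma flen_add (α β : ℕ →₀ ℕ) : flen (α + β) = flen α + flen β :=
  Finsupp.sum_add_index' (fun _ => rfl) (fun _ _ _ => rfl)

lemma isfact_single (r : ℚ) (i c : ℕ) :
    IsFactorization r ((c : ℚ) * r ^ i) (Finsupp.single i c) :=
  Finsupp.sum_single_index (by simp)

lemma flen_single (i c : ℕ) : flen (Finsupp.single i c) = c :=
  Finsupp.sum_single_index rfl

lemma coeff_le_flen (α : ℕ →₀ ℕ) (i : ℕ) : α i ≤ flen α := by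
  by_cases h : i ∈ α.support
  · exact Finset.single_le_sum (f := fun j => α j) (fun _ _ => Nat.zero_le _) h
  · simp [Finsupp.notMem_support_iff.mp h]

lemma flen_eq_zero {α : ℕ →₀ ℕ} (h : flen α = 0) : α = 0 := by
  ext i
  have := coeff_le_flen α i
  simp only [Finsupp.coe_zero, Pi.zero_apply]
  omega

lemma mem_S_iff {r x : ℚ} : x ∈ S r ↔ ∃ α, IsFactorization r x α := by
  constructor
  · intro hx
    induction hx using AddSubmonoid.closure_induction with
    | mem y hy =>
      obtain ⟨i, rfl⟩ := hy
      exact ⟨Finsupp.single i 1, by simpa using isfact_single r i 1⟩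
    | zero => exact ⟨0, by simp [IsFactorization]⟩
    | add y z _ _ hy hz =>
      obtain ⟨a, ha⟩ := hy; obtain ⟨b, hb⟩ := hz
      exact ⟨a + b, isfact_add ha hb⟩
  · rintro ⟨α, hα⟩
    rw [← hα]
    refine AddSubmonoid.sum_mem _ (fun i hi => ?_)
    have hmem : r ^ i ∈ S r := AddSubmonoid.subset_closure ⟨i, rfl⟩
    have := AddSubmonoid.nsmul_mem _ hmem (α i)
    simpa [nsmul_eq_mul] using this

lemma fact_pos {r x : ℚ} (h0 : 0 < r) {α : ℕ →₀ ℕ} (hα : IsFactorization r x α)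
    (hne : α ≠ 0) : 0 < x := by
  rw [← hα]
  obtain ⟨i, hi⟩ : α.support.Nonempty := Finsupp.support_nonempty_iff.mpr hne
  refine Finset.sum_pos (fun j hj => ?_) ⟨i, hi⟩
  have : α j ≠ 0 := Finsupp.mem_support_iff.mp hj
  have : (0:ℚ) < α j := by exact_mod_cast Nat.pos_of_ne_zero this
  positivity

lemma fact_ne_zero {r x : ℚ} (h0 : 0 < r) {α : ℕ →₀ ℕ} (hα : IsFactorization r x α)
    (hx : x ≠ 0) : α ≠ 0 := by
  rintro rfl
  apply hx
  rw [← hα]; simp [IsFactorization]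


section Rfacts
variable {r : ℚ}

lemma num_pos (h0 : 0 < r) : 0 < r.num := Rat.num_pos.mpr h0

lemma ncast (h0 : 0 < r) : ((r.num.toNat : ℤ)) = r.num := Int.toNat_of_nonneg (num_pos h0).le

lemma two_le_n (h0 : 0 < r) (hn : 1 < r.num) : 2 ≤ r.num.toNat := by omega

lemma n_lt_d (h0 : 0 < r) (h1 : r < 1) : r.num.toNat < r.den := by
  have h := Rat.lt_one_iff_num_lt_denom.mpr h1
  have := num_pos h0
  omega

lemma d_pos : 0 < r.den := r.pos

lemma coprime_nd (h0 : 0 < r) : Nat.Coprime r.num.toNat r.den := by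
  have := r.reduced
  have h : r.num.natAbs = r.num.toNat := by
    have := num_pos h0
    omega
  rwa [h] at this

lemma nq (h0 : 0 < r) : ((r.num.toNat : ℚ)) = (r.den : ℚ) * r := by
  have h := Rat.num_div_den r
  have hd : (r.den : ℚ) ≠ 0 := by
    have := r.pos; positivity
  rw [div_eq_iff hd] at h
  have h2 : (r.num : ℚ) = (r.den : ℚ) * r := by linarith
  rw [show ((r.num.toNat : ℚ)) = ((r.num.toNat : ℤ) : ℚ) by push_cast; ring, ncast h0, h2]

lemma step_pow (h0 : 0 < r) (i : ℕ) :
    ((r.num.toNat : ℚ)) * r ^ i = (r.den : ℚ) * r ^ (i + 1) := by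
  rw [nq h0, pow_succ]
  ring

lemma val_trade (h0 : 0 < r) (β : ℕ →₀ ℕ) (i : ℕ) :
    ((β + Finsupp.single i r.num.toNat).sum fun j c => (c : ℚ) * r ^ j) =
      ((β + Finsupp.single (i + 1) r.den).sum fun j c => (c : ℚ) * r ^ j) := by
  rw [val_add, val_add, (isfact_single r i r.num.toNat : _), (isfact_single r (i+1) r.den : _),
    step_pow h0 i]

lemma exists_decomp {α : ℕ →₀ ℕ} {i c : ℕ} (h : c ≤ α i) :
    ∃ β, α = β + Finsupp.single i c := by
  refine ⟨α - Finsupp.single i c, ?_⟩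
  rw [tsub_add_cancel_of_le (Finsupp.single_le_iff.mpr h)]

lemma trade_up (h0 : 0 < r) {x : ℚ} {α : ℕ →₀ ℕ} {i : ℕ}
    (hc : r.num.toNat ≤ α i) (hα : IsFactorization r x α) :
    ∃ α', IsFactorization r x α' ∧ flen α' + r.num.toNat = flen α + r.den ∧
      r.den ≤ α' (i + 1) := by
  obtain ⟨β, rfl⟩ := exists_decomp hc
  refine ⟨β + Finsupp.single (i+1) r.den, ?_, ?_, ?_⟩
  · unfold IsFactorization at *
    rw [← val_trade h0, hα]
  · rw [flen_add, flen_add, flen_single, flen_single]; ring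
  · simp

lemma trade_down (h0 : 0 < r) {x : ℚ} {α : ℕ →₀ ℕ} {i : ℕ}
    (hc : r.den ≤ α (i + 1)) (hα : IsFactorization r x α) :
    ∃ α', IsFactorization r x α' ∧ flen α' + r.den = flen α + r.num.toNat ∧
      r.num.toNat ≤ α' i := by
  obtain ⟨β, rfl⟩ := exists_decomp hc
  refine ⟨β + Finsupp.single i r.num.toNat, ?_, ?_, ?_⟩
  · unfold IsFactorization at *
    rw [val_trade h0, hα]
  · rw [flen_add, flen_add, flen_single, flen_single]; ring
  · simp

end Rfacts

section Core
variable {r : ℚ}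

lemma sum_ext {r x : ℚ} {α : ℕ →₀ ℕ} {N : ℕ} (hs : ∀ i ∈ α.support, i < N + 1)
    (h : IsFactorization r x α) :
    ∑ i ∈ Finset.range (N+1), (α i : ℚ) * r ^ i = x := by
  rw [← h]
  exact (Finsupp.sum_of_support_subset α
    (fun i hi => Finset.mem_range.mpr (hs i hi)) (fun i c => (c:ℚ) * r ^ i)
    (fun i _ => by simp)).symm

lemma flen_range {α : ℕ →₀ ℕ} {N : ℕ} (hs : ∀ i ∈ α.support, i < N + 1) :
    flen α = ∑ i ∈ Finset.range (N+1), α i :=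
  Finsupp.sum_of_support_subset α
    (fun i hi => Finset.mem_range.mpr (hs i hi)) _ (fun i _ => rfl)

lemma fact_G (h0 : 0 < r) {x : ℚ} {α : ℕ →₀ ℕ} {N : ℕ} (hs : ∀ i ∈ α.support, i < N + 1)
    (h : IsFactorization r x α) :
    ((∑ i ∈ Finset.range (N+1), α i * r.num.toNat ^ i * r.den ^ (N - i) : ℕ) : ℚ)
      = x * (r.den : ℚ) ^ N := by
  rw [← sum_ext hs h, Finset.sum_mul]
  push_cast
  refine Finset.sum_congr rfl (fun i hi => ?_)
  have hiN : i ≤ N := Nat.lt_succ_iff.mp (Finset.mem_range.mp hi)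
  have e1 : ((r.num.toNat : ℚ)) ^ i = (r.den:ℚ)^i * r^i := by rw [nq h0, mul_pow]
  have e2 : (r.den:ℚ)^i * (r.den:ℚ)^(N-i) = (r.den:ℚ)^N := by
    rw [← pow_add]; congr 1; omega
  calc (α i : ℚ) * (r.num.toNat:ℚ)^i * (r.den:ℚ)^(N-i)
      = (α i : ℚ) * r^i * ((r.den:ℚ)^i * (r.den:ℚ)^(N-i)) := by rw [e1]; ring
    _ = (α i : ℚ) * r^i * (r.den:ℚ)^N := by rw [e2]

lemma support_lt_left {α β : ℕ →₀ ℕ} :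
    ∀ i ∈ α.support, i < (α.support ∪ β.support).sup id + 1 := fun i hi =>
  Nat.lt_succ_of_le (Finset.le_sup (f := id) (Finset.mem_union_left _ hi))

lemma support_lt_right {α β : ℕ →₀ ℕ} :
    ∀ i ∈ β.support, i < (α.support ∪ β.support).sup id + 1 := fun i hi =>
  Nat.lt_succ_of_le (Finset.le_sup (f := id) (Finset.mem_union_right _ hi))

lemma flen_modeq (h0 : 0 < r) (h1 : r < 1) {x : ℚ} {α β : ℕ →₀ ℕ}
    (hα : IsFactorization r x α) (hβ : IsFactorization r x β) :
    flen α ≡ flen β [MOD r.den - r.num.toNat] := by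
  have hd : r.num.toNat < r.den := n_lt_d h0 h1
  set n := r.num.toNat with hnn
  set d := r.den with hdd
  set δ := d - n with hδδ
  set N := (α.support ∪ β.support).sup id with hN
  have hG : (∑ i ∈ Finset.range (N+1), α i * n ^ i * d ^ (N - i))
      = (∑ i ∈ Finset.range (N+1), β i * n ^ i * d ^ (N - i)) := by
    have g1 := fact_G h0 (support_lt_left (β := β)) hα
    have g2 := fact_G h0 (support_lt_right (α := α)) hβ
    exact_mod_cast g1.trans g2.symm
  have key : ∀ γ : ℕ →₀ ℕ, (∀ i ∈ γ.support, i < N+1) →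
      ((∑ i ∈ Finset.range (N+1), γ i * n^i * d^(N-i) : ℕ) : ZMod δ)
        = (flen γ : ZMod δ) * ((n : ZMod δ))^N := by
    intro γ hsγ
    rw [flen_range hsγ]
    push_cast
    rw [Finset.sum_mul]
    refine Finset.sum_congr rfl fun i hi => ?_
    have hiN : i ≤ N := Nat.lt_succ_iff.mp (Finset.mem_range.mp hi)
    have hdn : ((d:ℕ) : ZMod δ) = ((n:ℕ) : ZMod δ) := by
      have hde : (d:ℕ) = n + δ := by omega
      rw [hde]
      push_cast
      simp [ZMod.natCast_self]
    rw [hdn, mul_assoc, ← pow_add]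
    have : i + (N - i) = N := by omega
    rw [this]
  have e1 := key α (support_lt_left (β := β))
  have e2 := key β (support_lt_right (α := α))
  have hGz : ((∑ i ∈ Finset.range (N+1), α i * n^i * d^(N-i) : ℕ) : ZMod δ)
      = ((∑ i ∈ Finset.range (N+1), β i * n^i * d^(N-i) : ℕ) : ZMod δ) := by rw [hG]
  rw [e1, e2] at hGz
  have hcop : Nat.Coprime n δ :=
    (Nat.coprime_sub_self_right hd.le).mpr (coprime_nd h0)
  have hu : IsUnit ((n : ZMod δ)) := (ZMod.isUnit_iff_coprime n δ).mpr hcop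
  have := (hu.pow N).mul_right_cancel hGz
  exact (ZMod.natCast_eq_natCast_iff _ _ _).mp this


def Reduced (r : ℚ) (α : ℕ →₀ ℕ) : Prop := ∀ i, α (i + 1) < r.den

lemma core_unique {n d : ℕ} (hnd : Nat.Coprime n d) (hd : 0 < d) :
    ∀ N (a b : ℕ → ℕ), (∀ i, 1 ≤ i → a i < d) → (∀ i, 1 ≤ i → b i < d) →
      (∑ i ∈ Finset.range (N+1), a i * n ^ i * d ^ (N - i))
        = (∑ i ∈ Finset.range (N+1), b i * n ^ i * d ^ (N - i)) →
      ∀ i ≤ N, a i = b i := by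
  intro N
  induction N with
  | zero =>
    intro a b _ _ h i hi
    interval_cases i
    simpa using h
  | succ N ih =>
    intro a b ha hb h i hi
    have split : ∀ c : ℕ → ℕ,
        (∑ i ∈ Finset.range (N+2), c i * n ^ i * d ^ (N + 1 - i))
          = d * (∑ i ∈ Finset.range (N+1), c i * n ^ i * d ^ (N - i)) + c (N+1) * n ^ (N+1) := by
      intro c
      rw [Finset.sum_range_succ]
      have : ∀ j ∈ Finset.range (N+1), c j * n ^ j * d ^ (N + 1 - j)
          = d * (c j * n ^ j * d ^ (N - j)) := by
        intro j hj
        have hjN : j ≤ N := Nat.lt_succ_iff.mp (Finset.mem_range.mp hj)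
        have : N + 1 - j = (N - j) + 1 := by omega
        rw [this, pow_succ]
        ring
      rw [Finset.sum_congr rfl this, ← Finset.mul_sum]
      simp
    rw [split a, split b] at h
    -- mod d
    have hmod : a (N+1) * n ^ (N+1) ≡ b (N+1) * n ^ (N+1) [MOD d] := by
      have h1 : (d * (∑ i ∈ Finset.range (N+1), a i * n ^ i * d ^ (N - i)) + a (N+1) * n ^ (N+1)) % d
          = a (N+1) * n ^ (N+1) % d := by
        simp [Nat.add_mul_mod_self_left, Nat.mul_mod_right, Nat.add_comm]
      have h2 : (d * (∑ i ∈ Finset.range (N+1), b i * n ^ i * d ^ (N - i)) + b (N+1) * n ^ (N+1)) % d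
          = b (N+1) * n ^ (N+1) % d := by
        simp [Nat.add_mul_mod_self_left, Nat.mul_mod_right, Nat.add_comm]
      unfold Nat.ModEq
      rw [← h1, ← h2, h]
    have hcop : Nat.gcd d (n ^ (N+1)) = 1 := by
      have : Nat.Coprime (n ^ (N+1)) d := Nat.Coprime.pow_left _ hnd
      exact (Nat.coprime_comm.mp this)
    have htop : a (N+1) = b (N+1) := by
      have := Nat.ModEq.cancel_right_of_coprime hcop hmod
      have ha' := ha (N+1) (by omega)
      have hb' := hb (N+1) (by omega)
      have := this.eq_of_lt_of_lt ha' hb'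
      exact this
    have hrest : (∑ i ∈ Finset.range (N+1), a i * n ^ i * d ^ (N - i))
        = (∑ i ∈ Finset.range (N+1), b i * n ^ i * d ^ (N - i)) := by
      rw [htop] at h
      have := Nat.eq_of_mul_eq_mul_left hd (by omega :
        d * (∑ i ∈ Finset.range (N+1), a i * n ^ i * d ^ (N - i))
          = d * (∑ i ∈ Finset.range (N+1), b i * n ^ i * d ^ (N - i)))
      exact this
    rcases Nat.lt_succ_iff_lt_or_eq.mp (Nat.lt_succ_of_le hi) with hlt | heq
    · exact ih a b ha hb hrest i (Nat.lt_succ_iff.mp hlt)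
    · rw [heq]; exact htop


lemma reduced_unique (h0 : 0 < r) (h1 : r < 1) {x : ℚ} {α β : ℕ →₀ ℕ}
    (hα : IsFactorization r x α) (hβ : IsFactorization r x β)
    (hrα : Reduced r α) (hrβ : Reduced r β) : α = β := by
  set N := (α.support ∪ β.support).sup id with hN
  have hG : (∑ i ∈ Finset.range (N+1), α i * r.num.toNat ^ i * r.den ^ (N - i))
      = (∑ i ∈ Finset.range (N+1), β i * r.num.toNat ^ i * r.den ^ (N - i)) := by
    have g1 := fact_G h0 (support_lt_left (β := β)) hα
    have g2 := fact_G h0 (support_lt_right (α := α)) hβ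
    exact_mod_cast g1.trans g2.symm
  have key := core_unique (coprime_nd h0) r.pos N (fun i => α i) (fun i => β i)
    (fun i hi => by obtain ⟨j, rfl⟩ := Nat.exists_eq_add_of_le hi; rw [Nat.add_comm]; exact hrα j)
    (fun i hi => by obtain ⟨j, rfl⟩ := Nat.exists_eq_add_of_le hi; rw [Nat.add_comm]; exact hrβ j)
    hG
  ext i
  by_cases hi : i ≤ N
  · exact key i hi
  · have h1 : α i = 0 := by
      by_contra hc
      exact hi (Nat.lt_succ_iff.mp (support_lt_left (β := β) i (Finsupp.mem_support_iff.mpr hc)))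
    have h2 : β i = 0 := by
      by_contra hc
      exact hi (Nat.lt_succ_iff.mp (support_lt_right (α := α) i (Finsupp.mem_support_iff.mpr hc)))
    rw [h1, h2]

lemma reduce (h0 : 0 < r) (h1 : r < 1) {x : ℚ} :
    ∀ m (α : ℕ →₀ ℕ), flen α ≤ m → IsFactorization r x α →
      ∃ ρ, IsFactorization r x ρ ∧ Reduced r ρ ∧
        (ρ = α ∨ ((∃ i, r.num.toNat ≤ ρ i) ∧ flen ρ < flen α)) := by
  intro m
  induction m with
  | zero =>
    intro α hm hα
    have : α = 0 := flen_eq_zero (by omega)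
    subst this
    exact ⟨0, hα, fun i => by simpa using r.pos, Or.inl rfl⟩
  | succ m ih =>
    intro α hm hα
    by_cases hred : Reduced r α
    · exact ⟨α, hα, hred, Or.inl rfl⟩
    · unfold Reduced at hred
      push_neg at hred
      obtain ⟨i, hi⟩ := hred
      obtain ⟨α', hα', hlen, hcoef⟩ := trade_down h0 hi hα
      have hnd : r.num.toNat < r.den := n_lt_d h0 h1
      have hdle : r.den ≤ flen α := le_trans hi (coeff_le_flen α (i+1))
      have hlt : flen α' < flen α := by omega
      obtain ⟨ρ, hρ, hρred, hcase⟩ := ih α' (by omega) hα'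
      refine ⟨ρ, hρ, hρred, Or.inr ⟨?_, ?_⟩⟩
      · rcases hcase with rfl | ⟨⟨j, hj⟩, _⟩
        · exact ⟨i, hcoef⟩
        · exact ⟨j, hj⟩
      · rcases hcase with rfl | ⟨_, hlt'⟩
        · exact hlt
        · omega

lemma small_unique (h0 : 0 < r) (h1 : r < 1) {x : ℚ} {α β : ℕ →₀ ℕ}
    (hα : IsFactorization r x α) (hsmall : flen α < r.num.toNat)
    (hβ : IsFactorization r x β) : β = α := by
  have hrα : Reduced r α := fun i =>
    lt_of_le_of_lt (coeff_le_flen α (i+1)) (lt_trans hsmall (n_lt_d h0 h1))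
  obtain ⟨ρ, hρ, hρred, hcase⟩ := reduce h0 h1 (flen β) β le_rfl hβ
  have hρα : ρ = α := reduced_unique h0 h1 hρ hα hρred hrα
  rcases hcase with rfl | ⟨⟨j, hj⟩, _⟩
  · exact hρα
  · exfalso
    rw [hρα] at hj
    exact absurd (lt_of_le_of_lt (le_trans hj (coeff_le_flen α j)) hsmall) (lt_irrefl _)

lemma not_reduced_of_lt (h0 : 0 < r) (h1 : r < 1) {x : ℚ} {α β : ℕ →₀ ℕ}
    (hα : IsFactorization r x α) (hβ : IsFactorization r x β)
    (hlt : flen β < flen α) : ∃ i, r.den ≤ α (i + 1) := by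
  by_contra hc
  push_neg at hc
  have hrα : Reduced r α := hc
  obtain ⟨ρ, hρ, hρred, hcase⟩ := reduce h0 h1 (flen β) β le_rfl hβ
  have hρα : ρ = α := reduced_unique h0 h1 hρ hα hρred hrα
  rcases hcase with rfl | ⟨_, hlt'⟩
  · rw [hρα] at hlt; omega
  · rw [hρα] at hlt'; omega

lemma step_down (h0 : 0 < r) (h1 : r < 1) {x : ℚ} {α β : ℕ →₀ ℕ}
    (hα : IsFactorization r x α) (hβ : IsFactorization r x β)
    (hlt : flen β < flen α) :
    ∃ γ, IsFactorization r x γ ∧ flen γ + (r.den - r.num.toNat) = flen α := by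
  obtain ⟨i, hi⟩ := not_reduced_of_lt h0 h1 hα hβ hlt
  obtain ⟨γ, hγ, hlen, _⟩ := trade_down h0 hi hα
  have := n_lt_d h0 h1
  exact ⟨γ, hγ, by omega⟩

lemma isfact_nat (r : ℚ) (k : ℕ) : IsFactorization r (k : ℚ) (Finsupp.single 0 k) := by
  have := isfact_single r 0 k
  simpa using this

lemma up_iter (h0 : 0 < r) (h1 : r < 1) {k : ℕ} (hk : r.num.toNat ≤ k) :
    ∀ j, ∃ α, IsFactorization r (k : ℚ) α ∧
      flen α = k + j * (r.den - r.num.toNat) ∧ ∃ i, r.num.toNat ≤ α i := by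
  intro j
  induction j with
  | zero =>
    refine ⟨Finsupp.single 0 k, isfact_nat r k, by simp [flen_single], 0, by simpa using hk⟩
  | succ j ih =>
    obtain ⟨α, hα, hlen, i, hi⟩ := ih
    obtain ⟨α', hα', hlen', hcoef⟩ := trade_up h0 hi hα
    have hnd : r.num.toNat < r.den := n_lt_d h0 h1
    have hexp : (j+1) * (r.den - r.num.toNat) = j * (r.den - r.num.toNat) + (r.den - r.num.toNat) := by ring
    refine ⟨α', hα', by omega, i + 1, by omega⟩


lemma flen_pos {α : ℕ →₀ ℕ} (h : α ≠ 0) : 1 ≤ flen α := by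
  rcases Nat.eq_zero_or_pos (flen α) with h' | h'
  · exact absurd (flen_eq_zero h') h
  · exact h'

lemma flen_one_single {α : ℕ →₀ ℕ} (h : flen α = 1) : ∃ i, α = Finsupp.single i 1 := by
  have hne : α ≠ 0 := by intro h0; subst h0; simp [flen] at h
  obtain ⟨i, hi⟩ : α.support.Nonempty := Finsupp.support_nonempty_iff.mpr hne
  have h1 : α i = 1 := by
    have := coeff_le_flen α i
    have := Nat.pos_of_ne_zero (Finsupp.mem_support_iff.mp hi)
    omega
  refine ⟨i, ?_⟩
  ext j
  rcases eq_or_ne j i with rfl | hji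
  · simp [h1]
  · rw [Finsupp.single_eq_of_ne' (fun h' => hji h'.symm)]
    by_contra hc
    have hj : j ∈ α.support := Finsupp.mem_support_iff.mpr hc
    have hsub : ({i, j} : Finset ℕ) ⊆ α.support := by
      intro z hz
      simp only [Finset.mem_insert, Finset.mem_singleton] at hz
      rcases hz with rfl | rfl <;> assumption
    have hsum : ∑ z ∈ ({i, j} : Finset ℕ), α z ≤ flen α :=
      Finset.sum_le_sum_of_subset hsub
    rw [Finset.sum_pair (fun h' => hji h'.symm)] at hsum
    have := Nat.pos_of_ne_zero hc
    omega

lemma isAtom_iff (h0 : 0 < r) (h1 : r < 1) (hn : 1 < r.num) {a : ℚ} :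
    IsAtomS r a ↔ ∃ i, a = r ^ i := by
  constructor
  · rintro ⟨hmem, hne, hnot⟩
    obtain ⟨α, hα⟩ := mem_S_iff.mp hmem
    have hα0 : α ≠ 0 := fact_ne_zero h0 hα hne
    have h1le : 1 ≤ flen α := flen_pos hα0
    rcases eq_or_lt_of_le h1le with heq | hlt
    · obtain ⟨i, rfl⟩ := flen_one_single heq.symm
      refine ⟨i, ?_⟩
      rw [← hα]
      have := isfact_single r i 1
      unfold IsFactorization at this
      rw [this]
      simp
    · exfalso
      obtain ⟨i, hi⟩ : α.support.Nonempty := Finsupp.support_nonempty_iff.mpr hα0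
      have h1c : 1 ≤ α i := Nat.pos_of_ne_zero (Finsupp.mem_support_iff.mp hi)
      obtain ⟨β, rfl⟩ := exists_decomp h1c
      have hβ0 : β ≠ 0 := by
        intro h'
        subst h'
        rw [flen_add, flen_single] at hlt
        simp [flen] at hlt
      apply hnot
      have hvβ : IsFactorization r (β.sum fun j c => (c:ℚ) * r ^ j) β := rfl
      refine ⟨β.sum fun j c => (c:ℚ) * r ^ j, r ^ i, mem_S_iff.mpr ⟨β, rfl⟩,
        AddSubmonoid.subset_closure ⟨i, rfl⟩, ne_of_gt (fact_pos h0 hvβ hβ0),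
        pow_ne_zero _ (ne_of_gt h0), ?_⟩
      rw [← hα, val_add]
      have := isfact_single r i 1
      unfold IsFactorization at this
      rw [this]
      simp
  · rintro ⟨i, rfl⟩
    refine ⟨AddSubmonoid.subset_closure ⟨i, rfl⟩, pow_ne_zero _ (ne_of_gt h0), ?_⟩
    rintro ⟨y, z, hy, hz, hy0, hz0, heq⟩
    obtain ⟨β, hβ⟩ := mem_S_iff.mp hy
    obtain ⟨γ, hγ⟩ := mem_S_iff.mp hz
    have hfact : IsFactorization r (r ^ i) (β + γ) := by
      rw [heq]; exact isfact_add hβ hγ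
    have hsingle : IsFactorization r (r ^ i) (Finsupp.single i 1) := by
      have := isfact_single r i 1
      simpa using this
    have hsmall : flen (Finsupp.single i 1) < r.num.toNat := by
      rw [flen_single]
      have := two_le_n h0 hn
      omega
    have heqf := small_unique h0 h1 hsingle hsmall hfact
    have hflen : flen (β + γ) = 1 := by rw [heqf, flen_single]
    rw [flen_add] at hflen
    have hb1 := flen_pos (fact_ne_zero h0 hβ hy0)
    have hg1 := flen_pos (fact_ne_zero h0 hγ hz0)
    omega

lemma isfact_sum {ι : Type*} (s : Finset ι) (v : ι → ℚ) (F : ι → (ℕ →₀ ℕ))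
    (h : ∀ i ∈ s, IsFactorization r (v i) (F i)) :
    IsFactorization r (∑ i ∈ s, v i) (∑ i ∈ s, F i) := by
  classical
  induction s using Finset.induction with
  | empty => simp [IsFactorization]
  | @insert a s ha ih =>
    rw [Finset.sum_insert ha, Finset.sum_insert ha]
    exact isfact_add (h _ (Finset.mem_insert_self _ _))
      (ih fun i hi => h i (Finset.mem_insert_of_mem hi))

lemma flen_sum {ι : Type*} (s : Finset ι) (F : ι → (ℕ →₀ ℕ)) :
    flen (∑ i ∈ s, F i) = ∑ i ∈ s, flen (F i) := by
  classical
  induction s using Finset.induction with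
  | empty => simp [flen]
  | @insert a s ha ih =>
    rw [Finset.sum_insert ha, Finset.sum_insert ha, flen_add, ih]

lemma exists_rep (h0 : 0 < r) (h1 : r < 1) (hn : 1 < r.num) :
    ∀ t (α : ℕ →₀ ℕ) (x : ℚ), flen α = t → IsFactorization r x α →
      ∃ f : Fin t → ℚ, (∀ i, IsAtomS r (f i)) ∧ ∑ i, f i = x := by
  intro t
  induction t with
  | zero =>
    intro α x h hα
    have : α = 0 := flen_eq_zero h
    subst this
    refine ⟨Fin.elim0, fun i => i.elim0, ?_⟩
    rw [← hα]
    simp [IsFactorization]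
  | succ t ih =>
    intro α x h hα
    have hne : α ≠ 0 := by intro h'; subst h'; simp [flen] at h
    obtain ⟨i, hi⟩ : α.support.Nonempty := Finsupp.support_nonempty_iff.mpr hne
    have h1c : 1 ≤ α i := Nat.pos_of_ne_zero (Finsupp.mem_support_iff.mp hi)
    obtain ⟨β, rfl⟩ := exists_decomp h1c
    have hβlen : flen β = t := by rw [flen_add, flen_single] at h; omega
    have hvβ : IsFactorization r (β.sum fun j c => (c:ℚ) * r ^ j) β := rfl
    obtain ⟨f, hf, hsum⟩ := ih β _ hβlen hvβ
    refine ⟨Fin.cons (r ^ i) f, ?_, ?_⟩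
    · intro j
      refine Fin.cases ?_ ?_ j
      · exact (isAtom_iff h0 h1 hn).mpr ⟨i, rfl⟩
      · exact hf
    · rw [Fin.sum_cons, hsum]
      rw [← hα, val_add]
      have := isfact_single r i 1
      unfold IsFactorization at this
      rw [this]
      simp
      ring

lemma atomLengthSet_eq (h0 : 0 < r) (h1 : r < 1) (hn : 1 < r.num) (x : ℚ) :
    atomLengthSet r x = lengthSet r x := by
  ext t
  constructor
  · rintro ⟨f, hf, hsum⟩
    choose g hg using fun i => (isAtom_iff h0 h1 hn).mp (hf i)
    refine ⟨∑ i, Finsupp.single (g i) 1, ?_, ?_⟩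
    · have hfs := isfact_sum (r := r) Finset.univ (fun i => r ^ (g i))
        (fun i => Finsupp.single (g i) 1)
        (fun i _ => by simpa using isfact_single r (g i) 1)
      have hx : ∑ i, r ^ g i = x := by
        rw [← hsum]
        exact Finset.sum_congr rfl fun i _ => (hg i).symm
      rwa [hx] at hfs
    · rw [flen_sum]
      simp [flen_single]
  · rintro ⟨α, hα, hlen⟩
    exact exists_rep h0 h1 hn t α x hlen hα

end Core
end Aux

theorem stmt10 (r : ℚ) (h0 : 0 < r) (h1 : r < 1) (hn : 1 < r.num) (k : ℕ) (hk : 0 < k) :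
    (k < r.num.toNat → Uk r k = {k}) ∧
    (r.num.toNat ≤ k → k < r.den →
      Uk r k = {l : ℕ | ∃ j : ℕ, l = k + j * (r.den - r.num.toNat)}) ∧
    (r.den ≤ k → ∃ L : ℤ, L < 0 ∧
      Uk r k = {m : ℕ | ∃ j : ℤ, L ≤ j ∧ (m : ℤ) = k + j * ((r.den : ℤ) - r.num)}) := by
  have h2n : 2 ≤ r.num.toNat := Aux.two_le_n h0 hn
  have hnd : r.num.toNat < r.den := Aux.n_lt_d h0 h1
  have hae : ∀ x : ℚ, atomLengthSet r x = lengthSet r x := Aux.atomLengthSet_eq h0 h1 hn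
  have memUk : ∀ l, l ∈ Uk r k ↔ ∃ x : ℚ, x ≠ 0 ∧
      (∃ α, IsFactorization r x α ∧ flen α = k) ∧
      (∃ β, IsFactorization r x β ∧ flen β = l) := by
    intro l
    constructor
    · rintro ⟨x, hxS, hx0, hkx, hlx⟩
      rw [hae, lengthSet] at hkx hlx
      exact ⟨x, hx0, hkx, hlx⟩
    · rintro ⟨x, hx0, hkx, hlx⟩
      obtain ⟨α, hα, hαl⟩ := hkx
      refine ⟨x, Aux.mem_S_iff.mpr ⟨α, hα⟩, hx0, ?_, ?_⟩ <;> rw [hae, lengthSet]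
      · exact ⟨α, hα, hαl⟩
      · exact hlx
  have hkfact : IsFactorization r (k : ℚ) (Finsupp.single 0 k) := Aux.isfact_nat r k
  have hkne : (k : ℚ) ≠ 0 := Nat.cast_ne_zero.mpr (by omega)
  have hkUk : k ∈ Uk r k := (memUk k).mpr
    ⟨k, hkne, ⟨_, hkfact, Aux.flen_single 0 k⟩, ⟨_, hkfact, Aux.flen_single 0 k⟩⟩
  refine ⟨?_, ?_, ?_⟩
  · -- part (i)
    intro hkn
    ext l
    simp only [Set.mem_singleton_iff]
    constructor
    · intro hl
      obtain ⟨x, hx0, ⟨α, hα, hαl⟩, ⟨β, hβ, hβl⟩⟩ := (memUk l).mp hl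
      have := Aux.small_unique h0 h1 hα (by rw [hαl]; exact hkn) hβ
      rw [← hβl, this, hαl]
    · rintro rfl
      exact hkUk
  · -- part (ii)
    intro hkn hkd
    ext l
    simp only [Set.mem_setOf_eq]
    constructor
    · intro hl
      obtain ⟨x, hx0, ⟨α, hα, hαl⟩, ⟨β, hβ, hβl⟩⟩ := (memUk l).mp hl
      have hmod : k ≡ l [MOD r.den - r.num.toNat] := by
        rw [← hαl, ← hβl]
        exact Aux.flen_modeq h0 h1 hα hβ
      have hge : k ≤ l := by
        by_contra hc
        push_neg at hc
        obtain ⟨i, hi⟩ := Aux.not_reduced_of_lt h0 h1 hα hβ (by omega)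
        have := Aux.coeff_le_flen α (i + 1)
        omega
      obtain ⟨j, hj⟩ := (Nat.modEq_iff_dvd' hge).mp hmod
      refine ⟨j, ?_⟩
      rw [Nat.mul_comm j]
      omega
    · rintro ⟨j, rfl⟩
      obtain ⟨α, hα, hαl, _⟩ := Aux.up_iter h0 h1 hkn j
      exact (memUk _).mpr ⟨k, hkne, ⟨_, hkfact, Aux.flen_single 0 k⟩, ⟨α, hα, hαl⟩⟩
  · -- part (iii)
    intro hdk
    have hδ1 : 1 ≤ r.den - r.num.toNat := by omega
    have hcast : ((r.den - r.num.toNat : ℕ) : ℤ) = (r.den : ℤ) - r.num := by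
      have := Aux.ncast h0
      omega
    have hneU : (Uk r k).Nonempty := ⟨k, hkUk⟩
    set M := sInf (Uk r k) with hM
    have hMUk : M ∈ Uk r k := Nat.sInf_mem hneU
    have hMle : M ≤ k := Nat.sInf_le hkUk
    obtain ⟨x₀, hx₀0, ⟨α₀, hα₀, hα₀l⟩, ⟨β₀, hβ₀, hβ₀l⟩⟩ := (memUk M).mp hMUk
    have hmod0 : M ≡ k [MOD r.den - r.num.toNat] := by
      rw [← hα₀l, ← hβ₀l]
      exact Aux.flen_modeq h0 h1 hβ₀ hα₀
    obtain ⟨t, ht⟩ := (Nat.modEq_iff_dvd' hMle).mp hmod0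
    -- witness showing M ≤ k - δ
    have hwit : (k - (r.den - r.num.toNat) : ℕ) ∈ Uk r k := by
      refine (memUk _).mpr ⟨((k - (r.den - r.num.toNat) : ℕ) : ℚ), ?_, ?_, ?_⟩
      · exact Nat.cast_ne_zero.mpr (by omega)
      · refine ⟨Finsupp.single 0 (k - r.den) + Finsupp.single 1 r.den, ?_, ?_⟩
        · unfold IsFactorization
          rw [Aux.val_add]
          have e1 := Aux.isfact_single r 0 (k - r.den)
          have e2 := Aux.isfact_single r 1 r.den
          unfold IsFactorization at e1 e2
          rw [e1, e2, pow_zero, pow_one, mul_one, ← Aux.nq h0]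
          have c1 : ((k - r.den : ℕ) : ℚ) = (k : ℚ) - r.den := by
            push_cast [Nat.cast_sub hdk]; ring
          have c2 : ((k - (r.den - r.num.toNat) : ℕ) : ℚ)
              = (k : ℚ) - ((r.den : ℚ) - r.num.toNat) := by
            push_cast [Nat.cast_sub (by omega : r.den - r.num.toNat ≤ k),
              Nat.cast_sub hnd.le]
            ring
          rw [c1, c2]
          ring
        · rw [Aux.flen_add, Aux.flen_single, Aux.flen_single]
          omega
      · exact ⟨Finsupp.single 0 _, Aux.isfact_nat r _, Aux.flen_single 0 _⟩
    have hMle' : M ≤ k - (r.den - r.num.toNat) := Nat.sInf_le hwit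
    have ht1 : 1 ≤ t := by
      rcases Nat.eq_zero_or_pos t with rfl | h
      · simp at ht
        omega
      · exact h
    refine ⟨-(t : ℤ), by omega, ?_⟩
    ext m
    simp only [Set.mem_setOf_eq]
    have htZ : (M : ℤ) + ((r.den - r.num.toNat : ℕ) : ℤ) * t = k := by
      have : (k - M : ℕ) = (r.den - r.num.toNat) * t := ht
      omega
    have hδpos : (0 : ℤ) < ((r.den - r.num.toNat : ℕ) : ℤ) := by omega
    constructor
    · intro hm
      obtain ⟨x, hx0, ⟨α, hα, hαl⟩, ⟨β, hβ, hβl⟩⟩ := (memUk m).mp hm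
      have hmod : k ≡ m [MOD r.den - r.num.toNat] := by
        rw [← hαl, ← hβl]
        exact Aux.flen_modeq h0 h1 hα hβ
      obtain ⟨j, hj⟩ := hmod.dvd
      have hMm : M ≤ m := Nat.sInf_le hm
      refine ⟨j, ?_, ?_⟩
      · have e : ((r.den - r.num.toNat : ℕ) : ℤ) * (-(t:ℤ))
            = -(((r.den - r.num.toNat : ℕ) : ℤ) * t) := by ring
        have h1 : ((r.den - r.num.toNat : ℕ) : ℤ) * (-(t:ℤ))
            ≤ ((r.den - r.num.toNat : ℕ) : ℤ) * j := by
          have hMmZ : (M : ℤ) ≤ m := by exact_mod_cast hMm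
          linarith [hj]
        exact le_of_mul_le_mul_left h1 hδpos
      · rw [← hcast]
        have hc := mul_comm (((r.den - r.num.toNat : ℕ) : ℤ)) j
        linarith [hj]
    · rintro ⟨j, hjL, hjm⟩
      rw [← hcast] at hjm
      rcases le_or_gt 0 j with hj0 | hj0
      · lift j to ℕ using hj0 with j'
        have hm : m = k + j' * (r.den - r.num.toNat) := by exact_mod_cast hjm
        obtain ⟨α, hα, hαl, _⟩ := Aux.up_iter h0 h1 (le_trans hnd.le hdk) j'
        exact (memUk m).mpr ⟨k, hkne, ⟨_, hkfact, Aux.flen_single 0 k⟩,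
          ⟨α, hα, by rw [hαl, ← hm]⟩⟩
      · set u := (-j).toNat with hu
        have huZ : (u : ℤ) = -j := Int.toNat_of_nonneg (by omega)
        have hut : u ≤ t := by omega
        have hmk : m + u * (r.den - r.num.toNat) = k := by
          have hZ : (m : ℤ) + (u : ℤ) * ((r.den - r.num.toNat : ℕ) : ℤ) = k := by
            rw [huZ]
            linear_combination hjm
          exact_mod_cast hZ
        have chain : ∀ u' : ℕ, u' ≤ t →
            ∃ γ, IsFactorization r x₀ γ ∧ flen γ + u' * (r.den - r.num.toNat) = k := by
          intro u'
          induction u' with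
          | zero => exact fun _ => ⟨α₀, hα₀, by simpa using hα₀l⟩
          | succ v ihv =>
            intro hvt
            obtain ⟨γ, hγ, hγl⟩ := ihv (by omega)
            have hlt : flen β₀ < flen γ := by
              rw [hβ₀l]
              have e4 : (r.den - r.num.toNat) * v + (r.den - r.num.toNat)
                  ≤ (r.den - r.num.toNat) * t := by
                calc (r.den - r.num.toNat) * v + (r.den - r.num.toNat)
                    = (r.den - r.num.toNat) * (v + 1) := by ring
                  _ ≤ (r.den - r.num.toNat) * t := Nat.mul_le_mul_left _ hvt
              rw [Nat.mul_comm v] at hγl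
              have htn : k - M = (r.den - r.num.toNat) * t := ht
              generalize (r.den - r.num.toNat) * v = Q at hγl e4
              generalize (r.den - r.num.toNat) * t = P at e4 htn
              omega
            obtain ⟨γ', hγ', hγl'⟩ := Aux.step_down h0 h1 hγ hβ₀ hlt
            refine ⟨γ', hγ', ?_⟩
            have e5 : (v + 1) * (r.den - r.num.toNat)
                = v * (r.den - r.num.toNat) + (r.den - r.num.toNat) := by ring
            generalize hQ : v * (r.den - r.num.toNat) = Q at hγl e5
            omega
        obtain ⟨γ, hγ, hγl⟩ := chain u hut
        refine (memUk m).mpr ⟨x₀, hx₀0, ⟨α₀, hα₀, hα₀l⟩, ⟨γ, hγ, ?_⟩⟩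
        generalize hQ : u * (r.den - r.num.toNat) = Q at hγl hmk
        omega
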